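/- Fix integers K ≥ m ≥ 1, ε > 0, c : T_{K,m} → [0,1/K], and x, y ∈ [0,1]^K. Let P ∈ T_{K,m} and assume |x(i) − y(i)| ≤ ε for all i ∈ A(P) ∪ B(P). Let ε' ∈ (0,ε]. Then it is not possible that P_{c,ε}(x) and P_{c,ε'}(y) are descendants of two distinct children of P in the tree T_{K,m}. -/

import Mathlib

open Classical

noncomputable section

namespace MPB

variable (K m : ℕ)

/-- Max of `x` over a finite set of coordinates. -/
def fmax (x : Fin K → ℝ) (S : Finset (Fin K)) : ℝ := sSup (x '' ↑S)

/-- Min of `x` over a finite set of coordinates. -/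
def fmin (x : Fin K → ℝ) (S : Finset (Fin K)) : ℝ := sInf (x '' ↑S)

/-- range_B(x) = max_{k∈B} x(k) - min_{k∈B} x(k). -/
def rangeX (x : Fin K → ℝ) (B : Finset (Fin K)) : ℝ := fmax K x B - fmin K x B

/-- gap of the child obtained by splitting `B` into `T > B \ T`:
gap = min_{k∈T} x(k) - max_{ℓ∈B\T} x(ℓ). -/
def gapX (x : Fin K → ℝ) (T B : Finset (Fin K)) : ℝ := fmin K x T - fmax K x (B \ T)

/-- i(P): the largest `i` such that the first `i` parts of the ordered partition `L`
have total size at most `m`. -/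
def iIdx (L : List (Finset (Fin K))) : ℕ :=
  Nat.findGreatest (fun i => ((L.take i).map Finset.card).sum ≤ m) L.length

/-- A(P): the union of the first i(P) parts (the coordinates already identified as
belonging to the top m). -/
def Aset (L : List (Finset (Fin K))) : Finset (Fin K) :=
  (L.take (iIdx K m L)).foldr (· ∪ ·) ∅

/-- B(P): the currently undecided part; `∅` if `|A(P)| = m`, else the part S_{i(P)+1}. -/
def Bset (L : List (Finset (Fin K))) : Finset (Fin K) :=
  if (Aset K m L).card = m then ∅ else L.getD (iIdx K m L) ∅

/-- A vertex of the tree T_{K,m} is encoded by the sequence of splits leading to it from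
the root (head = most recently chosen top part): this recovers its underlying ordered
partition, by splitting at each step the then-current undecided set B into `T > B \ T`. -/
def partitionOf : List (Finset (Fin K)) → List (Finset (Fin K))
  | [] => [Finset.univ]
  | T :: l =>
    let L := partitionOf l
    let i := iIdx K m L
    L.take i ++ [T, L.getD i ∅ \ T] ++ L.drop (i + 1)

/-- A(P) for a vertex of T_{K,m}. -/
def Anode (l : List (Finset (Fin K))) : Finset (Fin K) := Aset K m (partitionOf K m l)

/-- B(P) for a vertex of T_{K,m}. -/
def Bnode (l : List (Finset (Fin K))) : Finset (Fin K) := Bset K m (partitionOf K m l)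

/-- Membership in T_{K,m}: each successive split must cut the current undecided set B
into a nonempty strict subset (the new top part) and the rest. The root is `[]`, a
vertex is a leaf iff its `Bnode` is empty, `T :: l` is a child of `l`, and the ancestors
of a vertex are exactly its list suffixes. -/
def Valid : List (Finset (Fin K)) → Prop
  | [] => True
  | T :: l => Valid l ∧ T.Nonempty ∧ T ⊂ Bnode K m l

/-- The elements of `B` sorted by `x` in (weakly) decreasing order,
ties broken by coordinate index (stability of merge sort). -/
def sortedB (x : Fin K → ℝ) (B : Finset (Fin K)) : List (Fin K) :=
  (B.sort (· ≤ ·)).mergeSort (fun a b => decide (x b ≤ x a))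

/-- The set `{a_1, …, a_j}` of the `j` largest coordinates of `B` under `x`. -/
def topSet (x : Fin K → ℝ) (B : Finset (Fin K)) (j : ℕ) : Finset (Fin K) :=
  ((sortedB K x B).take j).toFinset

/-- Line 7 of Algorithm 1: the algorithm, currently at the vertex `l`, returns `l`
because for some ancestor `q ⪯ l` and some child `q_j` of `q` (splitting B(q) at the
`j`-th position of the `x`-sorted order), the quantity `gap_{q_j}(x) - c(q)·range_q(x)`
is within `(d(l,q)+1)·6ε` of zero. -/
def stopAt (c : List (Finset (Fin K)) → ℝ) (ε : ℝ) (x : Fin K → ℝ)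
    (l : List (Finset (Fin K))) : Prop :=
  ∃ q ∈ l.tails, ∃ j, 1 ≤ j ∧ j < (Bnode K m q).card ∧
    |gapX K x (topSet K x (Bnode K m q) j) (Bnode K m q) - c q * rangeX K x (Bnode K m q)|
      ≤ ((l.length - q.length + 1 : ℕ) : ℝ) * (6 * ε)

/-- Lines 10-15 of Algorithm 1: move from `l` to the child `l_j` for the smallest
`j ∈ {1, …, ℓ-1}` with `gap_{l_j}(x) ≥ c(l)·range_l(x)`. -/
def descend (c : List (Finset (Fin K)) → ℝ) (x : Fin K → ℝ)
    (l : List (Finset (Fin K))) : List (Finset (Fin K)) :=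
  if h : ∃ j, 1 ≤ j ∧ j < (Bnode K m l).card ∧
      c l * rangeX K x (Bnode K m l)
        ≤ gapX K x (topSet K x (Bnode K m l) j) (Bnode K m l)
  then topSet K x (Bnode K m l) (Nat.find h) :: l
  else l

/-- The while loop of Algorithm 1, with fuel (the tree T_{K,m} has depth < K, so fuel K
suffices for the loop to terminate as in the paper). -/
def run (c : List (Finset (Fin K)) → ℝ) (ε : ℝ) (x : Fin K → ℝ) :
    ℕ → List (Finset (Fin K)) → List (Finset (Fin K))
  | 0, l => l
  | n + 1, l =>
    if Bnode K m l = ∅ then l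
    else if stopAt K m c ε x l then l
    else run c ε x n (descend K m c x l)

/-- The vertex P_{c,ε}(x) ∈ T_{K,m} output by Algorithm 1 on input x. The vertices
visited by the while loop are exactly the suffixes of the output. -/
def Pmap (c : List (Finset (Fin K)) → ℝ) (ε : ℝ) (x : Fin K → ℝ) :
    List (Finset (Fin K)) :=
  run K m c ε x K []

variable {K m}

lemma fmax_mem {x : Fin K → ℝ} {S : Finset (Fin K)} (hS : S.Nonempty) :
    ∃ a ∈ S, fmax K x S = x a := by
  have h : sSup (x '' ↑S) ∈ x '' ↑S :=
    Set.Nonempty.csSup_mem ((Finset.coe_nonempty.2 hS).image x) (S.finite_toSet.image x)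
  obtain ⟨a, ha, h⟩ := h
  exact ⟨a, ha, h.symm⟩

lemma fmin_mem {x : Fin K → ℝ} {S : Finset (Fin K)} (hS : S.Nonempty) :
    ∃ a ∈ S, fmin K x S = x a := by
  have h : sInf (x '' ↑S) ∈ x '' ↑S :=
    Set.Nonempty.csInf_mem ((Finset.coe_nonempty.2 hS).image x) (S.finite_toSet.image x)
  obtain ⟨a, ha, h⟩ := h
  exact ⟨a, ha, h.symm⟩

lemma le_fmax {x : Fin K → ℝ} {S : Finset (Fin K)} {a : Fin K} (ha : a ∈ S) :
    x a ≤ fmax K x S :=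
  le_csSup ((S.finite_toSet.image x).bddAbove) ⟨a, ha, rfl⟩

lemma fmin_le {x : Fin K → ℝ} {S : Finset (Fin K)} {a : Fin K} (ha : a ∈ S) :
    fmin K x S ≤ x a :=
  csInf_le ((S.finite_toSet.image x).bddBelow) ⟨a, ha, rfl⟩

lemma fmax_le {x : Fin K → ℝ} {S : Finset (Fin K)} (hS : S.Nonempty) {μ : ℝ}
    (h : ∀ a ∈ S, x a ≤ μ) : fmax K x S ≤ μ :=
  csSup_le ((Finset.coe_nonempty.2 hS).image x) (by rintro _ ⟨a, ha, rfl⟩; exact h a ha)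

lemma le_fmin {x : Fin K → ℝ} {S : Finset (Fin K)} (hS : S.Nonempty) {μ : ℝ}
    (h : ∀ a ∈ S, μ ≤ x a) : μ ≤ fmin K x S :=
  le_csInf ((Finset.coe_nonempty.2 hS).image x) (by rintro _ ⟨a, ha, rfl⟩; exact h a ha)

lemma range_nonneg {x : Fin K → ℝ} {B : Finset (Fin K)} (hB : B.Nonempty) :
    0 ≤ rangeX K x B := by
  obtain ⟨a, ha⟩ := hB
  have h1 := fmin_le (x := x) ha
  have h2 := le_fmax (x := x) ha
  unfold rangeX; linarith

lemma sortedB_perm (x : Fin K → ℝ) (B : Finset (Fin K)) :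
    (sortedB K x B).Perm (B.sort (· ≤ ·)) := List.mergeSort_perm _ _

lemma mem_sortedB {x : Fin K → ℝ} {B : Finset (Fin K)} {a : Fin K} :
    a ∈ sortedB K x B ↔ a ∈ B := by
  rw [(sortedB_perm x B).mem_iff, Finset.mem_sort]

lemma nodup_sortedB (x : Fin K → ℝ) (B : Finset (Fin K)) : (sortedB K x B).Nodup :=
  (sortedB_perm x B).nodup_iff.2 (B.sort_nodup _)

lemma length_sortedB (x : Fin K → ℝ) (B : Finset (Fin K)) :
    (sortedB K x B).length = B.card := by
  rw [(sortedB_perm x B).length_eq, Finset.length_sort]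

lemma pairwise_sortedB (x : Fin K → ℝ) (B : Finset (Fin K)) :
    (sortedB K x B).Pairwise (fun a b => x b ≤ x a) := by
  have h := List.pairwise_mergeSort (le := fun a b : Fin K => decide (x b ≤ x a))
    (by intro a b c hab hbc; simp only [decide_eq_true_eq] at *; exact hbc.trans hab)
    (by intro a b; simpa using le_total (x b) (x a)) (B.sort (· ≤ ·))
  simpa [sortedB] using h

lemma topSet_subset {x : Fin K → ℝ} {B : Finset (Fin K)} {j : ℕ} :
    topSet K x B j ⊆ B := by
  intro a ha
  rw [topSet, List.mem_toFinset] at ha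
  exact mem_sortedB.1 (List.mem_of_mem_take ha)

lemma card_topSet {x : Fin K → ℝ} {B : Finset (Fin K)} {j : ℕ} (h : j ≤ B.card) :
    (topSet K x B j).card = j := by
  rw [topSet, List.toFinset_card_of_nodup
    ((List.take_sublist _ _).nodup (nodup_sortedB x B))]
  rw [List.length_take, length_sortedB]
  omega

lemma index_of_mem_topSet {x : Fin K → ℝ} {B : Finset (Fin K)} {j : ℕ} {a : Fin K}
    (ha : a ∈ topSet K x B j) :
    ∃ i, ∃ h : i < (sortedB K x B).length, i < j ∧ (sortedB K x B)[i] = a := by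
  rw [topSet, List.mem_toFinset] at ha
  obtain ⟨i, hi, hia⟩ := List.mem_iff_getElem.1 ha
  have hi' : i < (sortedB K x B).length := by
    rw [List.length_take] at hi; omega
  refine ⟨i, hi', by rw [List.length_take] at hi; omega, ?_⟩
  rw [← hia, List.getElem_take]

lemma index_of_not_mem_topSet {x : Fin K → ℝ} {B : Finset (Fin K)} {j : ℕ} {a : Fin K}
    (haB : a ∈ B) (ha : a ∉ topSet K x B j) :
    ∃ i, ∃ h : i < (sortedB K x B).length, j ≤ i ∧ (sortedB K x B)[i] = a := by
  obtain ⟨i, hi, hia⟩ := List.mem_iff_getElem.1 (mem_sortedB.2 haB)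
  refine ⟨i, hi, ?_, hia⟩
  by_contra hij
  push_neg at hij
  apply ha
  rw [topSet, List.mem_toFinset]
  have hlt : i < (List.take j (sortedB K x B)).length := by rw [List.length_take]; omega
  have : (List.take j (sortedB K x B))[i] = a := by rw [List.getElem_take, hia]
  exact this ▸ List.getElem_mem hlt

lemma sorted_le {x : Fin K → ℝ} {B : Finset (Fin K)} {i i' : ℕ}
    (hi : i < (sortedB K x B).length) (hi' : i' < (sortedB K x B).length) (h : i ≤ i') :
    x ((sortedB K x B)[i']) ≤ x ((sortedB K x B)[i]) := by
  rcases eq_or_lt_of_le h with rfl | h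
  · exact le_rfl
  · exact List.pairwise_iff_getElem.1 (pairwise_sortedB x B) i i' hi hi' h

lemma gap_le_top {x : Fin K → ℝ} {B T : Finset (Fin K)} {j : ℕ}
    (hTB : T ⊆ B) (hcard : T.card = j) (hj1 : 1 ≤ j) (hj2 : j < B.card) :
    gapX K x T B ≤ gapX K x (topSet K x B j) B := by
  have hlen : (sortedB K x B).length = B.card := length_sortedB x B
  have hj1' : j - 1 < (sortedB K x B).length := by omega
  have hj' : j < (sortedB K x B).length := by omega
  set a := (sortedB K x B)[j-1] with ha
  set b := (sortedB K x B)[j] with hb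
  -- piece 1 : ∃ t ∈ T, x t ≤ x a
  have p1 : ∃ t ∈ T, x t ≤ x a := by
    have hW : (topSet K x B (j-1)).card < T.card := by
      calc (topSet K x B (j-1)).card = j - 1 := card_topSet (by omega)
        _ < T.card := by omega
    have hnsub : ¬ T ⊆ topSet K x B (j-1) :=
      fun hsub => absurd (Finset.card_le_card hsub) (by omega)
    obtain ⟨t, htT, htW⟩ := Finset.not_subset.1 hnsub
    obtain ⟨i, hi, hige, hit⟩ := index_of_not_mem_topSet (hTB htT) htW
    exact ⟨t, htT, hit ▸ sorted_le hj1' hi hige⟩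
  -- piece 2 : ∃ s ∈ B \ T, x b ≤ x s
  have p2 : ∃ s ∈ B \ T, x b ≤ x s := by
    have hVc : (topSet K x B (j+1)).card = j + 1 := card_topSet (by omega)
    have : ¬ topSet K x B (j+1) ⊆ T := fun hsub =>
      absurd (Finset.card_le_card hsub) (by omega)
    obtain ⟨s, hsV, hsT⟩ := Finset.not_subset.1 this
    obtain ⟨i, hi, hilt, his⟩ := index_of_mem_topSet hsV
    have hsB : s ∈ B := topSet_subset hsV
    exact ⟨s, Finset.mem_sdiff.2 ⟨hsB, hsT⟩, his ▸ sorted_le hi hj' (by omega)⟩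
  -- piece 3 : x a ≤ fmin of topSet
  have htop_ne : (topSet K x B j).Nonempty := by
    rw [← Finset.card_pos, card_topSet (le_of_lt hj2)]; omega
  have p3 : x a ≤ fmin K x (topSet K x B j) := by
    apply le_fmin htop_ne
    intro u hu
    obtain ⟨i, hi, hilt, hiu⟩ := index_of_mem_topSet hu
    exact hiu ▸ sorted_le hi hj1' (by omega)
  -- piece 4 : fmax of complement ≤ x b
  have hcomp_ne : (B \ topSet K x B j).Nonempty := by
    rw [← Finset.card_pos, Finset.card_sdiff_of_subset topSet_subset, card_topSet (le_of_lt hj2)]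
    omega
  have p4 : fmax K x (B \ topSet K x B j) ≤ x b := by
    apply fmax_le hcomp_ne
    intro u hu
    obtain ⟨huB, huT⟩ := Finset.mem_sdiff.1 hu
    obtain ⟨i, hi, hige, hiu⟩ := index_of_not_mem_topSet huB huT
    exact hiu ▸ sorted_le hj' hi hige
  obtain ⟨t, htT, hta⟩ := p1
  obtain ⟨s, hsBT, hbs⟩ := p2
  have h1 : fmin K x T ≤ x t := fmin_le htT
  have h2 : x s ≤ fmax K x (B \ T) := le_fmax hsBT
  unfold gapX
  linarith

lemma topSet_eq_of_gap_pos {y : Fin K → ℝ} {B T : Finset (Fin K)} {j : ℕ}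
    (hTB : T ⊆ B) (hcard : T.card = j) (hj2 : j < B.card)
    (hpos : 0 < gapX K y T B) : topSet K y B j = T := by
  have hcardT : (topSet K y B j).card = j := card_topSet (le_of_lt hj2)
  have hsub : topSet K y B j ⊆ T := by
    intro s hs
    by_contra hsT
    have : ¬ T ⊆ topSet K y B j := by
      intro h
      have := Finset.eq_of_subset_of_card_le h (by omega)
      rw [← this] at hs
      exact hsT hs
    obtain ⟨t, htT, htop⟩ := Finset.not_subset.1 this
    obtain ⟨i', hi', hilt, his⟩ := index_of_mem_topSet hs
    obtain ⟨i, hi, hige, hit⟩ := index_of_not_mem_topSet (hTB htT) htop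
    have hyts : y t ≤ y s := by
      rw [← his, ← hit]; exact sorted_le hi' hi (by omega)
    have hsB : s ∈ B := topSet_subset hs
    have h1 : fmin K y T ≤ y t := fmin_le htT
    have h2 : y s ≤ fmax K y (B \ T) := le_fmax (Finset.mem_sdiff.2 ⟨hsB, hsT⟩)
    unfold gapX at hpos
    linarith
  exact Finset.eq_of_subset_of_card_le hsub (by omega)

lemma fmax_transfer {x y : Fin K → ℝ} {S : Finset (Fin K)} {ε : ℝ} (hS : S.Nonempty)
    (h : ∀ i ∈ S, |x i - y i| ≤ ε) : fmax K x S ≤ fmax K y S + ε := by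
  obtain ⟨a, ha, he⟩ := fmax_mem (x := x) hS
  have h1 := (abs_le.1 (h a ha)).2
  have h2 := le_fmax (x := y) ha
  linarith [he]

lemma fmin_transfer {x y : Fin K → ℝ} {S : Finset (Fin K)} {ε : ℝ} (hS : S.Nonempty)
    (h : ∀ i ∈ S, |x i - y i| ≤ ε) : fmin K y S - ε ≤ fmin K x S := by
  obtain ⟨a, ha, he⟩ := fmin_mem (x := x) hS
  have h1 := (abs_le.1 (h a ha)).1
  have h2 := fmin_le (x := y) ha
  linarith [he]

lemma gap_transfer {x y : Fin K → ℝ} {T B : Finset (Fin K)} {ε : ℝ}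
    (hT : T.Nonempty) (hBT : (B \ T).Nonempty) (hTB : T ⊆ B)
    (h : ∀ i ∈ B, |x i - y i| ≤ ε) :
    gapX K y T B - 2 * ε ≤ gapX K x T B := by
  have h1 : fmin K y T - ε ≤ fmin K x T :=
    fmin_transfer hT (fun i hi => h i (hTB hi))
  have h2 : fmax K x (B \ T) ≤ fmax K y (B \ T) + ε :=
    fmax_transfer hBT (fun i hi => h i (Finset.mem_sdiff.1 hi).1)
  unfold gapX
  linarith

lemma range_transfer {x y : Fin K → ℝ} {B : Finset (Fin K)} {ε : ℝ} (hB : B.Nonempty)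
    (h : ∀ i ∈ B, |x i - y i| ≤ ε) : rangeX K x B ≤ rangeX K y B + 2 * ε := by
  have h1 := fmax_transfer hB h
  have h2 := fmin_transfer hB h
  unfold rangeX
  linarith


lemma suffix_descend (c : List (Finset (Fin K)) → ℝ) (x : Fin K → ℝ)
    (l : List (Finset (Fin K))) : l <:+ descend K m c x l := by
  unfold descend
  split
  · exact List.suffix_cons _ _
  · exact List.suffix_refl _

lemma descend_cases (c : List (Finset (Fin K)) → ℝ) (x : Fin K → ℝ)
    (l : List (Finset (Fin K))) :
    descend K m c x l = l ∨ ∃ Th, descend K m c x l = Th :: l := by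
  unfold descend
  split
  · exact Or.inr ⟨_, rfl⟩
  · exact Or.inl rfl

lemma suffix_run (c : List (Finset (Fin K)) → ℝ) (ε : ℝ) (x : Fin K → ℝ) :
    ∀ (n : ℕ) (l : List (Finset (Fin K))), l <:+ run K m c ε x n l := by
  intro n
  induction n with
  | zero => intro l; exact List.suffix_refl _
  | succ n ih =>
    intro l
    rw [run]
    split_ifs with h1 h2
    · exact List.suffix_refl _
    · exact List.suffix_refl _
    · exact (suffix_descend c x l).trans (ih _)

lemma suffix_eq_suffix {α : Type*} {l₁ l₂ L : List α} (h₁ : l₁ <:+ L) (h₂ : l₂ <:+ L)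
    (h : l₁.length = l₂.length) : l₁ = l₂ := by
  obtain ⟨s₁, rfl⟩ := h₁
  obtain ⟨s₂, he⟩ := h₂
  have hlen : s₂.length = s₁.length := by
    have := congrArg List.length he
    simp only [List.length_append] at this
    omega
  exact (List.append_inj_right he hlen).symm

lemma cons_suffix_of_suffix_ne {α : Type*} {l P : List α} (h : l <:+ P) (hne : l ≠ P) :
    ∃ a, a :: l <:+ P := by
  obtain ⟨s, rfl⟩ := h
  rcases List.eq_nil_or_concat s with rfl | ⟨s', b, rfl⟩
  · simp at hne
  · exact ⟨b, s', by simp [List.concat_eq_append]⟩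

lemma run_step (c : List (Finset (Fin K)) → ℝ) (ε : ℝ) (x : Fin K → ℝ) :
    ∀ (n : ℕ) (l P : List (Finset (Fin K))) (T : Finset (Fin K)),
    l <:+ P → (T :: P) <:+ run K m c ε x n l →
    Bnode K m P ≠ ∅ ∧ ¬ stopAt K m c ε x P ∧ descend K m c x P = T :: P := by
  intro n
  induction n with
  | zero =>
    intro l P T hlP hsuf
    exfalso
    have h1 := hsuf.length_le
    have h2 := hlP.length_le
    simp only [run, List.length_cons] at h1
    omega
  | succ n ih =>
    intro l P T hlP hsuf
    rw [run] at hsuf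
    by_cases hB : Bnode K m l = ∅
    · rw [if_pos hB] at hsuf
      exfalso
      have h1 := hsuf.length_le
      have h2 := hlP.length_le
      simp only [List.length_cons] at h1
      omega
    rw [if_neg hB] at hsuf
    by_cases hS : stopAt K m c ε x l
    · rw [if_pos hS] at hsuf
      exfalso
      have h1 := hsuf.length_le
      have h2 := hlP.length_le
      simp only [List.length_cons] at h1
      omega
    rw [if_neg hS] at hsuf
    rcases descend_cases (m := m) c x l with he | ⟨Th, he⟩
    · rw [he] at hsuf
      exact ih l P T hlP hsuf
    · rw [he] at hsuf
      by_cases hPl : P = l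
      · subst hPl
        refine ⟨hB, hS, ?_⟩
        rw [he]
        have h2 : (Th :: P) <:+ run K m c ε x n (Th :: P) := suffix_run c ε x n _
        have heq : T :: P = Th :: P := suffix_eq_suffix hsuf h2 rfl
        rw [heq]
      · obtain ⟨a, ha⟩ := cons_suffix_of_suffix_ne hlP (fun h => hPl h.symm)
        have ha' : (a :: l) <:+ run K m c ε x n (Th :: l) :=
          ha.trans ((List.suffix_cons T P).trans hsuf)
        have h2 : (Th :: l) <:+ run K m c ε x n (Th :: l) := suffix_run c ε x n _
        have heq : a :: l = Th :: l := suffix_eq_suffix ha' h2 rfl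
        rw [heq] at ha
        exact ih (Th :: l) P T ha hsuf

/-- Lemma 2.4, item 2: if |x(i) - y(i)| ≤ ε on A(P) ∪ B(P) and 0 < ε' ≤ ε, then
P_{c,ε}(x) and P_{c,ε'}(y) cannot be descendants of two distinct children of P.
(A descendant of a vertex is a list having it as a suffix.) -/
theorem stmt6 (K m : ℕ) (hm : 1 ≤ m) (hK : m ≤ K) (ε : ℝ) (hε : 0 < ε)
    (c : List (Finset (Fin K)) → ℝ)
    (hc : ∀ l, Valid K m l → c l ∈ Set.Icc (0 : ℝ) (1 / K))
    (x y : Fin K → ℝ)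
    (hx : ∀ i, x i ∈ Set.Icc (0 : ℝ) 1) (hy : ∀ i, y i ∈ Set.Icc (0 : ℝ) 1)
    (P : List (Finset (Fin K))) (hP : Valid K m P)
    (hxy : ∀ i ∈ Anode K m P ∪ Bnode K m P, |x i - y i| ≤ ε)
    (ε' : ℝ) (hε'pos : 0 < ε') (hε'le : ε' ≤ ε) :
    ¬ ∃ T₁ T₂ : Finset (Fin K), T₁ ≠ T₂ ∧
        (T₁ :: P) <:+ Pmap K m c ε x ∧ (T₂ :: P) <:+ Pmap K m c ε' y := by
  rintro ⟨T₁, T₂, hne, h1, h2⟩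
  rw [Pmap] at h1 h2
  obtain ⟨hB, hns, hd1⟩ := run_step c ε x K [] P T₁ List.nil_suffix h1
  obtain ⟨-, -, hd2⟩ := run_step c ε' y K [] P T₂ List.nil_suffix h2
  set B := Bnode K m P with hBdef
  -- extract the descend data for x
  rw [descend] at hd1 hd2
  by_cases hex1 : ∃ j, 1 ≤ j ∧ j < B.card ∧
      c P * rangeX K x B ≤ gapX K x (topSet K x B j) B
  swap
  · rw [dif_neg hex1] at hd1
    exact absurd hd1.symm (List.cons_ne_self _ _)
  by_cases hex2 : ∃ j, 1 ≤ j ∧ j < B.card ∧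
      c P * rangeX K y B ≤ gapX K y (topSet K y B j) B
  swap
  · rw [dif_neg hex2] at hd2
    exact absurd hd2.symm (List.cons_ne_self _ _)
  rw [dif_pos hex1] at hd1
  rw [dif_pos hex2] at hd2
  have hT1 : T₁ = topSet K x B (Nat.find hex1) := (List.cons.injEq _ _ _ _ ▸ hd1).1.symm
  have hT2 : T₂ = topSet K y B (Nat.find hex2) := (List.cons.injEq _ _ _ _ ▸ hd2).1.symm
  set n₁ := Nat.find hex1 with hn₁
  set n₂ := Nat.find hex2 with hn₂
  obtain ⟨hn₁1, hn₁2, hg1⟩ := Nat.find_spec hex1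
  obtain ⟨hn₂1, hn₂2, hg2⟩ := Nat.find_spec hex2
  -- the non-stopping condition for x at P
  have hns' : ∀ j, 1 ≤ j → j < B.card →
      6 * ε < |gapX K x (topSet K x B j) B - c P * rangeX K x B| := by
    intro j hj1 hj2
    by_contra hcon
    push_neg at hcon
    exact hns ⟨P, (List.mem_tails _ _).2 (List.suffix_refl P), j, hj1, hj2, by
      simpa using hcon⟩
  -- basic quantities
  have hxyB : ∀ i ∈ B, |x i - y i| ≤ ε := fun i hi =>
    hxy i (Finset.mem_union_right _ hi)
  have hyxB : ∀ i ∈ B, |y i - x i| ≤ ε := fun i hi => abs_sub_comm (x i) (y i) ▸ hxyB i hi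
  have hBne : B.Nonempty := Finset.nonempty_iff_ne_empty.2 hB
  have hc0 := hc P hP
  have hc00 : 0 ≤ c P := hc0.1
  have hc01 : c P ≤ 1 := by
    refine hc0.2.trans ?_
    have hK1 : (1 : ℝ) ≤ (K : ℝ) := by exact_mod_cast hm.trans hK
    rw [div_le_one (by linarith)]
    exact hK1
  have hrx0 : 0 ≤ rangeX K x B := range_nonneg hBne
  have hry0 : 0 ≤ rangeX K y B := range_nonneg hBne
  have hrxy : rangeX K x B ≤ rangeX K y B + 2 * ε := range_transfer hBne hxyB
  have hryx : rangeX K y B ≤ rangeX K x B + 2 * ε := range_transfer hBne hyxB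
  have hcrxy : c P * rangeX K x B ≤ c P * rangeX K y B + 2 * ε := by
    nlinarith
  have hcryx : c P * rangeX K y B ≤ c P * rangeX K x B + 2 * ε := by
    nlinarith
  -- work with S₁
  set S₁ := topSet K x B n₁ with hS₁def
  have hS₁B : S₁ ⊆ B := topSet_subset
  have hS₁card : S₁.card = n₁ := card_topSet (le_of_lt hn₁2)
  have hS₁ne : S₁.Nonempty := by rw [← Finset.card_pos, hS₁card]; omega
  have hBS₁ne : (B \ S₁).Nonempty := by
    rw [← Finset.card_pos, Finset.card_sdiff_of_subset hS₁B, hS₁card]; omega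
  have h6x1 := hns' n₁ hn₁1 hn₁2
  have hgx1 : c P * rangeX K x B + 6 * ε < gapX K x S₁ B := by
    rw [abs_of_nonneg (by linarith)] at h6x1
    linarith
  have hgy1 : gapX K x S₁ B - 2 * ε ≤ gapX K y S₁ B :=
    gap_transfer hS₁ne hBS₁ne hS₁B hyxB
  have hpos1 : 0 < gapX K y S₁ B := by nlinarith
  have htop : topSet K y B n₁ = S₁ := topSet_eq_of_gap_pos hS₁B hS₁card hn₁2 hpos1
  have hfind : n₂ ≤ n₁ := by
    apply Nat.find_le
    refine ⟨hn₁1, hn₁2, ?_⟩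
    rw [htop]
    linarith
  rcases eq_or_lt_of_le hfind with heq | hlt
  · exact hne (by rw [hT1, hT2, heq, htop])
  -- n₂ < n₁ : derive a contradiction
  · have hmin := Nat.find_min hex1 hlt
    push_neg at hmin
    have hlt2 : gapX K x (topSet K x B n₂) B < c P * rangeX K x B := hmin hn₂1 (by omega)
    have h6x2 := hns' n₂ hn₂1 (by omega)
    have hlt2' : gapX K x (topSet K x B n₂) B < c P * rangeX K x B - 6 * ε := by
      rw [abs_of_nonpos (by linarith)] at h6x2
      linarith
    set S₂ := topSet K y B n₂ with hS₂def
    have hS₂B : S₂ ⊆ B := topSet_subset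
    have hS₂card : S₂.card = n₂ := card_topSet (by omega)
    have hS₂ne : S₂.Nonempty := by rw [← Finset.card_pos, hS₂card]; omega
    have hBS₂ne : (B \ S₂).Nonempty := by
      rw [← Finset.card_pos, Finset.card_sdiff_of_subset hS₂B, hS₂card]; omega
    have hg2x : gapX K y S₂ B - 2 * ε ≤ gapX K x S₂ B :=
      gap_transfer hS₂ne hBS₂ne hS₂B hxyB
    have hQ1 : gapX K x S₂ B ≤ gapX K x (topSet K x B n₂) B :=
      gap_le_top hS₂B hS₂card hn₂1 (by omega)
    linarith

end MPB
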